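/- Let V ∈ ℝ^{n×d} have linearly independent columns (so VᵀV is invertible), let W_s ∈ ℝ^{m×k_s} and Y_s ∈ ℝ^{n×k_s} for s = 1,…,T, and let Λ̃ ∈ ℝ^{m×m} be symmetric positive definite. Set X_s = W_sᵀ ⊗ V, Λ_t = Λ̃ ⊗ (VᵀV), A_t = Λ_t + Σ_{s=1}^t X_sᵀX_s and b_{t-1} = Σ_{s=1}^{t-1} X_sᵀ vec(Y_s). Then A_t is invertible and the MultiVAW iterate θ_t = A_t^{-1} b_{t-1} satisfies θ_t = vec(Θ_t) with Θ_t = (VᵀV)^{-1} Vᵀ ( Σ_{s=1}^{t-1} Y_s W_sᵀ ) ( Λ̃ + Σ_{s=1}^t W_s W_sᵀ )^{-1}. -/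

import Mathlib

open Matrix Finset
open scoped Kronecker

noncomputable section

/-- Column-stacking vectorization of a matrix: `vec M (j, i) = M i j`. -/
def vec {a b : ℕ} (M : Matrix (Fin a) (Fin b) ℝ) : Fin b × Fin a → ℝ :=
  fun p => M p.2 p.1

lemma kron_mulVec_vec {a b c e : ℕ} (P : Matrix (Fin a) (Fin b) ℝ)
    (Q : Matrix (Fin c) (Fin e) ℝ) (M : Matrix (Fin e) (Fin b) ℝ) :
    (P ⊗ₖ Q).mulVec (_root_.vec M) = _root_.vec (Q * M * Pᵀ) := by
  ext ⟨i1, i2⟩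
  simp only [mulVec, dotProduct, _root_.vec, Matrix.mul_apply, kroneckerMap_apply,
    Fintype.sum_prod_type, transpose_apply, Finset.sum_mul, Finset.mul_sum]
  exact Finset.sum_congr rfl fun j1 _ => Finset.sum_congr rfl fun j2 _ => by ring

lemma sum_kronecker_right {a c : ℕ} (F : Finset ℕ)
    (M : ℕ → Matrix (Fin a) (Fin a) ℝ) (G : Matrix (Fin c) (Fin c) ℝ) :
    (∑ s ∈ F, M s) ⊗ₖ G = ∑ s ∈ F, (M s ⊗ₖ G) := by
  ext ⟨i1, i2⟩ ⟨j1, j2⟩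
  simp [kroneckerMap_apply, Finset.sum_apply, Matrix.sum_apply, Finset.sum_mul]

lemma gram_posDef {n d : ℕ} (V : Matrix (Fin n) (Fin d) ℝ)
    (hV : LinearIndependent ℝ (fun j : Fin d => fun i : Fin n => V i j)) :
    (Vᵀ * V).PosDef := by
  refine Matrix.PosDef.of_dotProduct_mulVec_pos ?_ ?_
  · simpa [conjTranspose_eq_transpose_of_trivial] using isHermitian_conjTranspose_mul_self V
  · intro x hx
    have hVx : V.mulVec x ≠ 0 := by
      intro h
      apply hx
      have := Fintype.linearIndependent_iff.mp hV x ?_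
      · ext j; exact this j
      · ext i
        have := congrFun h i
        simpa [mulVec, dotProduct, mul_comm] using this
    have key : star x ⬝ᵥ (Vᵀ * V) *ᵥ x = (V *ᵥ x) ⬝ᵥ (V *ᵥ x) := by
      rw [← mulVec_mulVec, dotProduct_mulVec, star_trivial, vecMul_transpose]
    rw [key]
    have h0 : (V *ᵥ x) ⬝ᵥ (V *ᵥ x) ≠ 0 := fun h => hVx (dotProduct_self_eq_zero.mp h)
    exact lt_of_le_of_ne (Finset.sum_nonneg fun i _ => mul_self_nonneg _) (Ne.symm h0)

/-- **Closed form of MultiVAW under Kronecker regularization** (Proposition 3).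
With `V` having linearly independent columns, `X_s = Wₛᵀ ⊗ V`,
`Λ_t = Λ̃ ⊗ (VᵀV)`, `A_t = Λ_t + ∑_{s=1}^t XₛᵀXₛ` and
`b_{t-1} = ∑_{s=1}^{t-1} Xₛᵀ vec(Yₛ)`, the matrix `A_t` is invertible and the
MultiVAW iterate `θ_t = A_t⁻¹ b_{t-1}` satisfies `θ_t = vec(Θ_t)` with
`Θ_t = (VᵀV)⁻¹ Vᵀ (∑_{s<t} Yₛ Wₛᵀ) (Λ̃ + ∑_{s≤t} Wₛ Wₛᵀ)⁻¹`. -/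
theorem multivaw_kronecker_closed_form
    (T n d m : ℕ) (k : ℕ → ℕ)
    (V : Matrix (Fin n) (Fin d) ℝ)
    (hV : LinearIndependent ℝ (fun j : Fin d => fun i : Fin n => V i j))
    (W : (s : ℕ) → Matrix (Fin m) (Fin (k s)) ℝ)
    (Y : (s : ℕ) → Matrix (Fin n) (Fin (k s)) ℝ)
    (Λt : Matrix (Fin m) (Fin m) ℝ) (hΛt : Λt.PosDef)
    (X : (s : ℕ) → Matrix (Fin (k s) × Fin n) (Fin m × Fin d) ℝ)
    (hX : ∀ s, X s = (W s)ᵀ ⊗ₖ V)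
    (t : ℕ) (ht : t ∈ Icc 1 T)
    (A : Matrix (Fin m × Fin d) (Fin m × Fin d) ℝ)
    (hA : A = Λt ⊗ₖ (Vᵀ * V) + ∑ s ∈ Icc 1 t, (X s)ᵀ * X s)
    (b : Fin m × Fin d → ℝ)
    (hb : b = ∑ s ∈ Icc 1 (t - 1), (X s)ᵀ.mulVec (_root_.vec (Y s))) :
    IsUnit A.det
    ∧ A⁻¹.mulVec b
      = _root_.vec ((Vᵀ * V)⁻¹ * Vᵀ * (∑ s ∈ Icc 1 (t - 1), Y s * (W s)ᵀ)
          * (Λt + ∑ s ∈ Icc 1 t, W s * (W s)ᵀ)⁻¹) := by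
  set G := Vᵀ * V with hGdef
  set S := Λt + ∑ s ∈ Icc 1 t, W s * (W s)ᵀ with hSdef
  have hG : G.PosDef := gram_posDef V hV
  have hsum : (∑ s ∈ Icc 1 t, W s * (W s)ᵀ).PosSemidef := by
    refine Finset.sum_induction _ _ (fun a b ha hb => ha.add hb) Matrix.PosSemidef.zero ?_
    intro s _
    have := posSemidef_self_mul_conjTranspose (W s)
    rwa [conjTranspose_eq_transpose_of_trivial] at this
  have hS : S.PosDef := hΛt.add_posSemidef hsum
  have hXt : ∀ s, (X s)ᵀ = W s ⊗ₖ Vᵀ := by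
    intro s
    rw [hX s, ← kroneckerMap_transpose, transpose_transpose]
  have hXtX : ∀ s, (X s)ᵀ * X s = (W s * (W s)ᵀ) ⊗ₖ G := by
    intro s
    rw [hXt s, hX s, ← mul_kronecker_mul]
  have hAeq : A = S ⊗ₖ G := by
    rw [hA, hSdef, add_kronecker, sum_kronecker_right]
    congr 1
    exact Finset.sum_congr rfl fun s _ => hXtX s
  have hdet : IsUnit A.det := by
    rw [hAeq, det_kronecker]
    exact (hS.det_pos.ne'.isUnit.pow _).mul (hG.det_pos.ne'.isUnit.pow _)
  refine ⟨hdet, ?_⟩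
  have hbeq : b = _root_.vec (Vᵀ * (∑ s ∈ Icc 1 (t - 1), Y s * (W s)ᵀ)) := by
    rw [hb]
    have hterm : ∀ s, (X s)ᵀ.mulVec (_root_.vec (Y s)) = _root_.vec (Vᵀ * Y s * (W s)ᵀ) := by
      intro s
      rw [hXt s, kron_mulVec_vec]
    ext p
    simp only [hterm, Finset.sum_apply, _root_.vec, Matrix.mul_sum, Matrix.sum_apply,
      Matrix.mul_assoc]
  have hSinvT : (S⁻¹)ᵀ = S⁻¹ := by
    rw [Matrix.transpose_nonsing_inv]
    congr 1
    have := hS.isHermitian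
    rwa [Matrix.IsHermitian, conjTranspose_eq_transpose_of_trivial] at this
  rw [hAeq, inv_kronecker, hbeq, kron_mulVec_vec, hSinvT, ← Matrix.mul_assoc]
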